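/- Let M be a commutative monoid satisfying the refinement property, and let a, b, c be elements of M with n a positive integer. Then a + b = n·c if and only if there exist elements x_0, x_1, ..., x_n of M such that a = Σ_{k=0}^{n} k·x_k, b = Σ_{k=0}^{n} (n-k)·x_k, and c = Σ_{k=0}^{n} x_k. -/
import Mathlib

open Finset

/-- The refinement property for a commutative monoid. -/
def HasRefinement (M : Type*) [AddCommMonoid M] : Prop :=
  ∀ a₀ a₁ b₀ b₁ : M, a₀ + a₁ = b₀ + b₁ →
    ∃ c₀₀ c₀₁ c₁₀ c₁₁ : M,
      a₀ = c₀₀ + c₀₁ ∧ a₁ = c₁₀ + c₁₁ ∧ b₀ = c₀₀ + c₁₀ ∧ b₁ = c₀₁ + c₁₁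

lemma refine_sum {M : Type*} [AddCommMonoid M] (hM : HasRefinement M) :
    ∀ (m : ℕ) (u v : M) (y : ℕ → M),
    u + v = ∑ i ∈ Finset.range (m+1), y i →
    ∃ z w : ℕ → M, (∀ i < m+1, y i = z i + w i) ∧
      u = ∑ i ∈ Finset.range (m+1), z i ∧ v = ∑ i ∈ Finset.range (m+1), w i := by
  intro m
  induction m with
  | zero =>
    intro u v y h
    refine ⟨fun _ => u, fun _ => v, ?_, by simp, by simp⟩
    intro i hi
    interval_cases i
    simpa using h.symm
  | succ m ih =>
    intro u v y h
    rw [Finset.sum_range_succ] at h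
    obtain ⟨c00, c01, c10, c11, hu, hv, hs, hl⟩ := hM u v _ _ h
    obtain ⟨z, w, hy, hz, hw⟩ := ih c00 c10 y hs.symm
    refine ⟨fun i => if i = m+1 then c01 else z i,
            fun i => if i = m+1 then c11 else w i, ?_, ?_, ?_⟩
    · intro i hi
      rcases Nat.lt_succ_iff_lt_or_eq.mp hi with hi' | rfl
      · simp only [if_neg (Nat.ne_of_lt hi')]
        exact hy i hi'
      · simp only [if_pos rfl]
        exact hl
    · rw [Finset.sum_range_succ, if_pos rfl, hu, hz]
      congr 1
      exact Finset.sum_congr rfl fun i hi => (if_neg (Nat.ne_of_lt (Finset.mem_range.mp hi))).symm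
    · rw [Finset.sum_range_succ, if_pos rfl, hv, hw]
      congr 1
      exact Finset.sum_congr rfl fun i hi => (if_neg (Nat.ne_of_lt (Finset.mem_range.mp hi))).symm

lemma forward {M : Type*} [AddCommMonoid M] (hM : HasRefinement M) :
    ∀ (n : ℕ) (a b c : M), a + b = (n+1) • c →
    ∃ x : ℕ → M, a = ∑ k ∈ Finset.range (n+2), k • x k ∧
      b = ∑ k ∈ Finset.range (n+2), (n+1-k) • x k ∧
      c = ∑ k ∈ Finset.range (n+2), x k := by
  intro n
  induction n with
  | zero =>
    intro a b c h
    have hc : c = a + b := by simpa using h.symm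
    refine ⟨fun k => if k = 0 then b else a, by simp [Finset.sum_range_succ],
      by simp [Finset.sum_range_succ], ?_⟩
    rw [Finset.sum_range_succ, Finset.sum_range_one, if_pos rfl, if_neg one_ne_zero, hc, add_comm]
  | succ n ih =>
    intro a b c h
    rw [succ_nsmul] at h
    obtain ⟨a', u, b', v, ha, hb, hnc, hc⟩ := hM a b _ _ h
    obtain ⟨y, hay, hby, hcy⟩ := ih a' b' c hnc.symm
    obtain ⟨z, w, hyzw, hu, hv⟩ := refine_sum hM (n+1) u v y (hc.symm.trans hcy)
    refine ⟨fun j => (if 1 ≤ j then z (j-1) else 0) + (if j ≤ n+1 then w j else 0),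
      ?_, ?_, ?_⟩
    · rw [ha, hay, hu]
      simp only [smul_add]
      rw [Finset.sum_add_distrib, Finset.sum_range_succ' (fun j => j • (if 1 ≤ j then z (j-1) else 0)) (n+2)]
      rw [Finset.sum_range_succ (fun j => j • (if j ≤ n+1 then w j else 0)) (n+2)]
      simp only [Nat.le_add_left, if_pos, Nat.add_sub_cancel, Nat.sub_zero, zero_smul,
        add_zero, if_neg (by omega : ¬ (n+2 ≤ n+1)), if_neg (by omega : ¬ (1 ≤ 0)), smul_zero]
      rw [← Finset.sum_add_distrib, ← Finset.sum_add_distrib]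
      refine Finset.sum_congr rfl fun k hk => ?_
      have hk' := Finset.mem_range.mp hk
      rw [hyzw k hk', if_pos (by omega : k ≤ n+1), smul_add, succ_nsmul]
      abel
    · rw [hb, hby, hv]
      simp only [smul_add]
      rw [Finset.sum_add_distrib, Finset.sum_range_succ' (fun j => (n+2-j) • (if 1 ≤ j then z (j-1) else 0)) (n+2)]
      rw [Finset.sum_range_succ (fun j => (n+2-j) • (if j ≤ n+1 then w j else 0)) (n+2)]
      simp only [Nat.le_add_left, if_pos, Nat.add_sub_cancel, smul_zero, add_zero, Nat.sub_zero,
        if_neg (by omega : ¬ (n+2 ≤ n+1)), if_neg (by omega : ¬ (1 ≤ 0)), Nat.succ_sub_succ]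
      rw [← Finset.sum_add_distrib, ← Finset.sum_add_distrib]
      refine Finset.sum_congr rfl fun k hk => ?_
      have hk' := Finset.mem_range.mp hk
      rw [hyzw k hk', if_pos (by omega : k ≤ n+1), smul_add]
      have : n + 2 - k = (n + 1 - k) + 1 := by omega
      rw [this, succ_nsmul]
      abel
    · rw [hc, hu, hv]
      rw [Finset.sum_add_distrib, Finset.sum_range_succ' (fun j => (if 1 ≤ j then z (j-1) else 0)) (n+2)]
      rw [Finset.sum_range_succ (fun j => (if j ≤ n+1 then w j else 0)) (n+2)]
      simp only [Nat.le_add_left, if_pos, Nat.add_sub_cancel,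
        if_neg (by omega : ¬ (n+2 ≤ n+1)), if_neg (by omega : ¬ (1 ≤ 0)), add_zero]
      congr 1
      refine Finset.sum_congr rfl fun k hk => ?_
      have hk' := Finset.mem_range.mp hk
      rw [if_pos (by omega : k ≤ n+1)]

theorem stmt0 {M : Type*} [AddCommMonoid M] (hM : HasRefinement M)
    (a b c : M) (n : ℕ) (hn : 0 < n) :
    a + b = n • c ↔
      ∃ x : Fin (n + 1) → M,
        a = ∑ k : Fin (n + 1), (k : ℕ) • x k ∧
        b = ∑ k : Fin (n + 1), (n - (k : ℕ)) • x k ∧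
        c = ∑ k : Fin (n + 1), x k := by
  constructor
  · intro h
    obtain ⟨m, rfl⟩ : ∃ m, n = m + 1 := ⟨n - 1, by omega⟩
    obtain ⟨x, hx1, hx2, hx3⟩ := forward hM m a b c h
    refine ⟨fun k => x k, ?_, ?_, ?_⟩
    · rw [hx1]; exact (Fin.sum_univ_eq_sum_range (fun k => k • x k) (m+2)).symm
    · rw [hx2]; exact (Fin.sum_univ_eq_sum_range (fun k => (m+1-k) • x k) (m+2)).symm
    · rw [hx3]; exact (Fin.sum_univ_eq_sum_range (fun k => x k) (m+2)).symm
  · rintro ⟨x, rfl, rfl, rfl⟩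
    rw [← Finset.sum_add_distrib, Finset.smul_sum]
    refine Finset.sum_congr rfl fun k _ => ?_
    rw [← add_nsmul]
    congr 1
    have := k.isLt
    omega
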